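/- arXiv:2008.00955 — 4 statements merged into one kernel-verified Lean document; each statement's English description precedes it below -/
import Mathlib

section
/- Let n ≥ 1 and let r ≥ 1 be a real number. For all vectors a, b ∈ ℝⁿ one has (|a|^{r-1}a − |b|^{r-1}b)·(a − b) ≥ (1/2)|a|^{r-1}|a − b|² + (1/2)|b|^{r-1}|a − b|², where · is the Euclidean inner product and |·| the Euclidean norm. -/
open scoped RealInnerProductSpace

/-- Pointwise strong monotonicity of `a ↦ |a|^{r-1} a` on `ℝⁿ`:
`(|a|^{r-1}a − |b|^{r-1}b)·(a − b) ≥ ½|a|^{r-1}|a−b|² + ½|b|^{r-1}|a−b|²`. -/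
theorem forchheimer_pointwise_strong_monotone (n : ℕ) (hn : 1 ≤ n) (r : ℝ) (hr : 1 ≤ r)
    (a b : EuclideanSpace ℝ (Fin n)) :
    (1 / 2) * ‖a‖ ^ (r - 1) * ‖a - b‖ ^ 2 + (1 / 2) * ‖b‖ ^ (r - 1) * ‖a - b‖ ^ 2 ≤
      ⟪(‖a‖ ^ (r - 1)) • a - (‖b‖ ^ (r - 1)) • b, a - b⟫ := by
  have hx : (0:ℝ) ≤ ‖a‖ := norm_nonneg a
  have hy : (0:ℝ) ≤ ‖b‖ := norm_nonneg b
  have hp : (0:ℝ) ≤ r - 1 := by linarith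
  have key : 0 ≤ (‖a‖ ^ (r-1) - ‖b‖ ^ (r-1)) * (‖a‖ ^ 2 - ‖b‖ ^ 2) := by
    rcases le_total ‖a‖ ‖b‖ with h | h
    · have h1 : ‖a‖ ^ (r-1) ≤ ‖b‖ ^ (r-1) := Real.rpow_le_rpow hx h hp
      have h2 : ‖a‖ ^ 2 ≤ ‖b‖ ^ 2 := by nlinarith
      nlinarith
    · have h1 : ‖b‖ ^ (r-1) ≤ ‖a‖ ^ (r-1) := Real.rpow_le_rpow hy h hp
      have h2 : ‖b‖ ^ 2 ≤ ‖a‖ ^ 2 := by nlinarith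
      nlinarith
  have hsub : ‖a - b‖ ^ 2 = ‖a‖ ^ 2 - 2 * ⟪a, b⟫ + ‖b‖ ^ 2 := norm_sub_sq_real a b
  have hinner : ⟪(‖a‖ ^ (r - 1)) • a - (‖b‖ ^ (r - 1)) • b, a - b⟫ =
      ‖a‖ ^ (r-1) * (‖a‖ ^ 2 - ⟪a, b⟫) - ‖b‖ ^ (r-1) * (⟪a, b⟫ - ‖b‖ ^ 2) := by
    rw [inner_sub_left, real_inner_smul_left, real_inner_smul_left, inner_sub_right,
      inner_sub_right, real_inner_self_eq_norm_sq, real_inner_comm b a,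
      real_inner_self_eq_norm_sq]
  rw [hinner, hsub]
  nlinarith [key]
end

section
/- Let (X, 𝒜, m) be a measure space, n ≥ 1, and let r ≥ 1 be a real number. Let u, v : X → ℝⁿ be measurable with ∫_X |u|^{r+1} dm < ∞ and ∫_X |v|^{r+1} dm < ∞. Then ∫_X (|u(x)|^{r-1}u(x) − |v(x)|^{r-1}v(x)) · (u(x) − v(x)) dm(x) ≥ 2^{1-r} ∫_X |u(x) − v(x)|^{r+1} dm(x), where · is the Euclidean inner product and |·| the Euclidean norm on ℝⁿ. -/
open MeasureTheory
open scoped RealInnerProductSpace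

section Aux

/-- `x ^ (r-1) * x = x ^ r` for `x ≥ 0`, `r ≥ 1`. -/
private lemma aux_rpow_mul_self {x : ℝ} (hx : 0 ≤ x) {r : ℝ} (hr : 1 ≤ r) :
    x ^ (r - 1) * x = x ^ r := by
  rcases hx.eq_or_lt with h | h
  · rw [← h, mul_zero, Real.zero_rpow (by linarith)]
  · nth_rewrite 2 [← Real.rpow_one x]
    rw [← Real.rpow_add h]
    ring_nf

/-- superadditivity of `x ^ r` on nonneg reals for `r ≥ 1`. -/
private lemma aux_rpow_superadd {x y : ℝ} (hx : 0 ≤ x) (hy : 0 ≤ y) {r : ℝ} (hr : 1 ≤ r) :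
    x ^ r + y ^ r ≤ (x + y) ^ r := by
  have h := NNReal.add_rpow_le_rpow_add x.toNNReal y.toNNReal hr
  have hc : ((x.toNNReal + y.toNNReal : NNReal) : ℝ) = x + y := by
    simp [Real.coe_toNNReal _ hx, Real.coe_toNNReal _ hy]
  calc x ^ r + y ^ r
      = ((x.toNNReal ^ r + y.toNNReal ^ r : NNReal) : ℝ) := by
        push_cast [NNReal.coe_rpow, Real.coe_toNNReal _ hx, Real.coe_toNNReal _ hy]
        ring
    _ ≤ (((x.toNNReal + y.toNNReal) ^ r : NNReal) : ℝ) := by exact_mod_cast h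
    _ = (x + y) ^ r := by rw [NNReal.coe_rpow, hc]

/-- power mean: `(s+t)^r ≤ 2^(r-1) * (s^r + t^r)`. -/
private lemma aux_power_mean {s t : ℝ} (hs : 0 ≤ s) (ht : 0 ≤ t) {r : ℝ} (hr : 1 ≤ r) :
    (s + t) ^ r ≤ 2 ^ (r - 1) * (s ^ r + t ^ r) := by
  have hconv := (convexOn_rpow hr).2 (Set.mem_Ici.2 hs) (Set.mem_Ici.2 ht)
    (by norm_num : (0:ℝ) ≤ 1/2) (by norm_num : (0:ℝ) ≤ 1/2) (by norm_num)
  simp only [smul_eq_mul] at hconv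
  have hmid : ((s + t) / 2) ^ r ≤ (s ^ r + t ^ r) / 2 := by
    calc ((s + t) / 2) ^ r = (1/2 * s + 1/2 * t) ^ r := by ring_nf
      _ ≤ 1/2 * s ^ r + 1/2 * t ^ r := hconv
      _ = (s ^ r + t ^ r) / 2 := by ring
  have hdiv : ((s + t) / 2) ^ r = (s + t) ^ r / 2 ^ r :=
    Real.div_rpow (by linarith) (by norm_num) r
  have h2r : (2:ℝ) ^ (r - 1) = 2 ^ r / 2 := by
    rw [Real.rpow_sub (by norm_num), Real.rpow_one]
  rw [hdiv] at hmid
  have h2pos : (0:ℝ) < 2 ^ r := Real.rpow_pos_of_pos (by norm_num) r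
  rw [h2r]
  rw [div_le_div_iff₀ h2pos (by norm_num)] at hmid
  nlinarith

/-- Endpoint inequality E1 (antiparallel case). -/
private lemma aux_E1 {s t : ℝ} (hs : 0 ≤ s) (ht : 0 ≤ t) {r : ℝ} (hr : 1 ≤ r) :
    (2:ℝ) ^ (1 - r) * (s + t) ^ (r + 1) ≤ (s ^ r + t ^ r) * (s + t) := by
  have hst : 0 ≤ s + t := by linarith
  have h1 : (s + t) ^ (r + 1) = (s + t) ^ r * (s + t) := by
    have := aux_rpow_mul_self hst (by linarith : 1 ≤ r + 1)
    rw [show r + 1 - 1 = r by ring] at this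
    linarith [this]
  rw [h1, ← mul_assoc]
  apply mul_le_mul_of_nonneg_right _ hst
  have hpm := aux_power_mean hs ht hr
  have hkey : (2:ℝ) ^ (1 - r) * (2:ℝ) ^ (r - 1) = 1 := by
    rw [← Real.rpow_add (by norm_num)]
    norm_num
  have h2 : (0:ℝ) < 2 ^ (1 - r) := Real.rpow_pos_of_pos (by norm_num) _
  have h := mul_le_mul_of_nonneg_left hpm h2.le
  have heq : (2:ℝ) ^ (1 - r) * (2 ^ (r - 1) * (s ^ r + t ^ r)) = s ^ r + t ^ r := by
    rw [← mul_assoc, hkey, one_mul]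
  linarith

/-- Endpoint inequality E2 (parallel case), assuming `t ≤ s`. -/
private lemma aux_E2 {s t : ℝ} (ht : 0 ≤ t) (hts : t ≤ s) {r : ℝ} (hr : 1 ≤ r) :
    (2:ℝ) ^ (1 - r) * (s - t) ^ (r + 1) ≤ (s ^ r - t ^ r) * (s - t) := by
  set x := s - t with hx
  have hx0 : 0 ≤ x := by linarith
  have hsup : x ^ r + t ^ r ≤ s ^ r := by
    have := aux_rpow_superadd hx0 ht hr
    rw [show x + t = s by ring] at this
    exact this
  have h1 : x ^ (r + 1) = x ^ r * x := by
    have := aux_rpow_mul_self hx0 (by linarith : 1 ≤ r + 1)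
    rw [show r + 1 - 1 = r by ring] at this
    linarith [this]
  have h2le1 : (2:ℝ) ^ (1 - r) ≤ 1 :=
    Real.rpow_le_one_of_one_le_of_nonpos (by norm_num) (by linarith)
  have hxr : 0 ≤ x ^ r := Real.rpow_nonneg hx0 r
  calc (2:ℝ) ^ (1 - r) * x ^ (r + 1)
      ≤ 1 * x ^ (r + 1) := by
        apply mul_le_mul_of_nonneg_right h2le1 (Real.rpow_nonneg hx0 _)
    _ = x ^ r * x := by rw [one_mul, h1]
    _ ≤ (s ^ r - t ^ r) * x := by
        apply mul_le_mul_of_nonneg_right _ hx0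
        linarith
end Aux

section Core

/-- Scalar core inequality. -/
private lemma aux_core {s t c r : ℝ} (hs : 0 ≤ s) (ht : 0 ≤ t) (hr : 1 ≤ r)
    (hc : |c| ≤ s * t) :
    (2:ℝ) ^ (1 - r) * (s ^ 2 + t ^ 2 - 2 * c) ^ ((r + 1) / 2) ≤
      s ^ (r + 1) + t ^ (r + 1) - (s ^ (r - 1) + t ^ (r - 1)) * c := by
  have habs := abs_le.1 hc
  -- (s±t)^2 as rpow arguments
  have hsq : ∀ y : ℝ, 0 ≤ y → (y ^ 2) ^ ((r + 1) / 2) = y ^ (r + 1) := by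
    intro y hy
    rw [← Real.rpow_natCast y 2, ← Real.rpow_mul hy]
    congr 1
    push_cast
    ring
  have hE1 : (2:ℝ) ^ (1 - r) * ((s + t) ^ 2) ^ ((r + 1) / 2) ≤
      s ^ (r + 1) + t ^ (r + 1) + (s ^ (r - 1) + t ^ (r - 1)) * (s * t) := by
    rw [hsq _ (by linarith)]
    have := aux_E1 hs ht hr
    have e1 : s ^ r * (s + t) = s ^ (r+1) + s ^ (r-1) * (s * t) := by
      have h1 : s ^ (r-1) * s = s ^ r := aux_rpow_mul_self hs hr
      have h2 : s ^ r * s = s ^ (r+1) := by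
        have := aux_rpow_mul_self hs (by linarith : 1 ≤ r + 1)
        rwa [show r + 1 - 1 = r by ring] at this
      nlinarith [h1, h2]
    have e2 : t ^ r * (s + t) = t ^ (r+1) + t ^ (r-1) * (s * t) := by
      have h1 : t ^ (r-1) * t = t ^ r := aux_rpow_mul_self ht hr
      have h2 : t ^ r * t = t ^ (r+1) := by
        have := aux_rpow_mul_self ht (by linarith : 1 ≤ r + 1)
        rwa [show r + 1 - 1 = r by ring] at this
      nlinarith [h1, h2]
    nlinarith [this]
  have hE2 : (2:ℝ) ^ (1 - r) * ((s - t) ^ 2) ^ ((r + 1) / 2) ≤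
      s ^ (r + 1) + t ^ (r + 1) - (s ^ (r - 1) + t ^ (r - 1)) * (s * t) := by
    rcases le_total t s with hts | hst
    · rw [show (s - t)^2 = ((s - t) : ℝ)^2 by ring, hsq _ (by linarith)]
      have := aux_E2 ht hts hr
      have e1 : s ^ (r-1) * s = s ^ r := aux_rpow_mul_self hs hr
      have e2 : t ^ (r-1) * t = t ^ r := aux_rpow_mul_self ht hr
      have h2s : s ^ r * s = s ^ (r+1) := by
        have := aux_rpow_mul_self hs (by linarith : 1 ≤ r + 1)
        rwa [show r + 1 - 1 = r by ring] at this
      have h2t : t ^ r * t = t ^ (r+1) := by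
        have := aux_rpow_mul_self ht (by linarith : 1 ≤ r + 1)
        rwa [show r + 1 - 1 = r by ring] at this
      nlinarith [this]
    · rw [show (s - t)^2 = ((t - s) : ℝ)^2 by ring, hsq _ (by linarith)]
      have := aux_E2 hs hst hr
      have e1 : s ^ (r-1) * s = s ^ r := aux_rpow_mul_self hs hr
      have e2 : t ^ (r-1) * t = t ^ r := aux_rpow_mul_self ht hr
      have h2s : s ^ r * s = s ^ (r+1) := by
        have := aux_rpow_mul_self hs (by linarith : 1 ≤ r + 1)
        rwa [show r + 1 - 1 = r by ring] at this
      have h2t : t ^ r * t = t ^ (r+1) := by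
        have := aux_rpow_mul_self ht (by linarith : 1 ≤ r + 1)
        rwa [show r + 1 - 1 = r by ring] at this
      nlinarith [this]
  rcases eq_or_lt_of_le (mul_nonneg hs ht) with h0 | hpos
  · -- s*t = 0, hence c = 0
    have hc0 : c = 0 := by
      have := abs_nonneg c
      have : |c| = 0 := le_antisymm (by rw [← h0] at hc; exact hc) this
      exact abs_eq_zero.1 this
    subst hc0
    have : s ^ 2 + t ^ 2 - 2 * 0 = (s + t) ^ 2 - 2 * (s * t) := by ring
    rw [this, ← h0]
    have h2 : (s + t) ^ 2 - 2 * 0 = (s + t) ^ 2 := by ring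
    rw [h2]
    have := hE1
    rw [← h0] at this
    linarith
  · -- s*t > 0 : convexity argument
    set lam : ℝ := (s * t - c) / (2 * (s * t)) with hlam
    have hst2 : (0:ℝ) < 2 * (s * t) := by linarith
    have hlam0 : 0 ≤ lam := div_nonneg (by linarith) (by linarith)
    have hlam1 : lam ≤ 1 := by
      rw [div_le_one hst2]; linarith
    have hcomb : lam * (s + t) ^ 2 + (1 - lam) * (s - t) ^ 2 = s ^ 2 + t ^ 2 - 2 * c := by
      have : lam * (2 * (s * t)) = s * t - c := by
        rw [hlam]; field_simp; exact mul_div_cancel_left₀ _ hpos.ne'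
      nlinarith [this]
    have hconv := (convexOn_rpow (by linarith : 1 ≤ (r + 1) / 2)).2
      (Set.mem_Ici.2 (sq_nonneg (s + t))) (Set.mem_Ici.2 (sq_nonneg (s - t)))
      hlam0 (by linarith : (0:ℝ) ≤ 1 - lam) (by ring)
    simp only [smul_eq_mul] at hconv
    rw [hcomb] at hconv
    have h2p : (0:ℝ) < 2 ^ (1 - r) := Real.rpow_pos_of_pos (by norm_num) _
    have step := mul_le_mul_of_nonneg_left hconv h2p.le
    have final : (2:ℝ)^(1-r) * (lam * ((s + t) ^ 2) ^ ((r+1)/2) +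
        (1 - lam) * ((s - t) ^ 2) ^ ((r+1)/2)) ≤
        s ^ (r + 1) + t ^ (r + 1) - (s ^ (r - 1) + t ^ (r - 1)) * c := by
      have t1 := mul_le_mul_of_nonneg_left hE1 hlam0
      have t2 := mul_le_mul_of_nonneg_left hE2 (by linarith : (0:ℝ) ≤ 1 - lam)
      have hlc : lam * (2 * (s * t)) = s * t - c := by
        rw [hlam]; field_simp; exact mul_div_cancel_left₀ _ hpos.ne'
      have hlc' : (s ^ (r - 1) + t ^ (r - 1)) * (lam * (2 * (s * t))) =
          (s ^ (r - 1) + t ^ (r - 1)) * (s * t - c) := by rw [hlc]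
      nlinarith [t1, t2, hlc']
    linarith
end Core

section Pointwise

variable {E : Type*} [NormedAddCommGroup E] [InnerProductSpace ℝ E]

/-- The pointwise strong-monotonicity inequality for the Forchheimer nonlinearity. -/
private lemma forchheimer_pointwise {r : ℝ} (hr : 1 ≤ r) (a b : E) :
    (2:ℝ) ^ (1 - r) * ‖a - b‖ ^ (r + 1) ≤
      ⟪(‖a‖ ^ (r - 1)) • a - (‖b‖ ^ (r - 1)) • b, a - b⟫ := by
  set s := ‖a‖ with hs
  set t := ‖b‖ with ht
  set c := ⟪a, b⟫ with hc
  have hs0 : 0 ≤ s := norm_nonneg a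
  have ht0 : 0 ≤ t := norm_nonneg b
  have hcabs : |c| ≤ s * t := abs_real_inner_le_norm a b
  have hnorm : ‖a - b‖ ^ 2 = s ^ 2 + t ^ 2 - 2 * c := by
    rw [norm_sub_sq_real]; ring
  have hexpand : ⟪(‖a‖ ^ (r - 1)) • a - (‖b‖ ^ (r - 1)) • b, a - b⟫ =
      s ^ (r + 1) + t ^ (r + 1) - (s ^ (r - 1) + t ^ (r - 1)) * c := by
    have hba : (⟪b, a⟫ : ℝ) = c := (real_inner_comm a b).trans hc.symm
    have hab : (⟪a, b⟫ : ℝ) = c := hc.symm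
    have haa : (⟪a, a⟫ : ℝ) = s ^ 2 := real_inner_self_eq_norm_sq a
    have hbb : (⟪b, b⟫ : ℝ) = t ^ 2 := real_inner_self_eq_norm_sq b
    rw [inner_sub_left, real_inner_smul_left, real_inner_smul_left,
      inner_sub_right, inner_sub_right, haa, hbb, hab, hba]
    have h2s : s ^ (r-1) * s ^ 2 = s ^ (r+1) := by
      have h1 : s ^ (r-1) * s = s ^ r := aux_rpow_mul_self hs0 hr
      have h2 : s ^ r * s = s ^ (r+1) := by
        have := aux_rpow_mul_self hs0 (by linarith : 1 ≤ r + 1)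
        rwa [show r + 1 - 1 = r by ring] at this
      nlinarith [h1, h2]
    have h2t : t ^ (r-1) * t ^ 2 = t ^ (r+1) := by
      have h1 : t ^ (r-1) * t = t ^ r := aux_rpow_mul_self ht0 hr
      have h2 : t ^ r * t = t ^ (r+1) := by
        have := aux_rpow_mul_self ht0 (by linarith : 1 ≤ r + 1)
        rwa [show r + 1 - 1 = r by ring] at this
      nlinarith [h1, h2]
    rw [← hs, ← ht]
    linear_combination h2s + h2t
  have hpow : ‖a - b‖ ^ (r + 1) = (s ^ 2 + t ^ 2 - 2 * c) ^ ((r + 1) / 2) := by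
    rw [← hnorm, ← Real.rpow_natCast (‖a - b‖) 2, ← Real.rpow_mul (norm_nonneg _)]
    congr 1
    push_cast
    ring
  rw [hexpand, hpow]
  exact aux_core hs0 ht0 hr hcabs

end Pointwise

/-- Strong monotonicity of the Forchheimer nonlinearity `C(u) = |u|^{r-1}u`:
`⟨C(u) − C(v), u − v⟩_{L²(m)} ≥ 2^{1−r} ‖u − v‖_{L^{r+1}(m)}^{r+1}`. -/
theorem forchheimer_integral_strong_monotone {X : Type*} [MeasurableSpace X] (m : Measure X)
    (n : ℕ) (hn : 1 ≤ n) (r : ℝ) (hr : 1 ≤ r)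
    (u v : X → EuclideanSpace ℝ (Fin n)) (hu : Measurable u) (hv : Measurable v)
    (hur : Integrable (fun x => ‖u x‖ ^ (r + 1)) m)
    (hvr : Integrable (fun x => ‖v x‖ ^ (r + 1)) m) :
    (2 : ℝ) ^ (1 - r) * ∫ x, ‖u x - v x‖ ^ (r + 1) ∂m ≤
      ∫ x, ⟪(‖u x‖ ^ (r - 1)) • u x - (‖v x‖ ^ (r - 1)) • v x, u x - v x⟫ ∂m := by
  -- measurability of the inner-product integrand
  have hrpow : Continuous (fun x : ℝ => x ^ (r - 1)) :=
    Real.continuous_rpow_const (by linarith)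
  have hCu : Measurable (fun x => (‖u x‖ ^ (r - 1)) • u x) :=
    (hrpow.measurable.comp hu.norm).smul hu
  have hCv : Measurable (fun x => (‖v x‖ ^ (r - 1)) • v x) :=
    (hrpow.measurable.comp hv.norm).smul hv
  have hmeas : Measurable (fun x =>
      ⟪(‖u x‖ ^ (r - 1)) • u x - (‖v x‖ ^ (r - 1)) • v x, u x - v x⟫) :=
    (hCu.sub hCv).inner (hu.sub hv)
  -- integrability of the inner-product integrand
  have hbound : ∀ x, ‖⟪(‖u x‖ ^ (r - 1)) • u x - (‖v x‖ ^ (r - 1)) • v x, u x - v x⟫‖ ≤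
      2 * (‖u x‖ ^ (r + 1) + ‖v x‖ ^ (r + 1)) := by
    intro x
    set a := u x
    set b := v x
    have hs0 : (0:ℝ) ≤ ‖a‖ := norm_nonneg a
    have ht0 : (0:ℝ) ≤ ‖b‖ := norm_nonneg b
    have h1 : ‖⟪(‖a‖ ^ (r - 1)) • a - (‖b‖ ^ (r - 1)) • b, a - b⟫‖ ≤
        ‖(‖a‖ ^ (r - 1)) • a - (‖b‖ ^ (r - 1)) • b‖ * ‖a - b‖ :=
      norm_inner_le_norm _ _
    have hCa : ‖(‖a‖ ^ (r - 1)) • a‖ = ‖a‖ ^ r := by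
      rw [norm_smul, Real.norm_eq_abs, abs_of_nonneg (Real.rpow_nonneg hs0 _)]
      exact aux_rpow_mul_self hs0 hr
    have hCb : ‖(‖b‖ ^ (r - 1)) • b‖ = ‖b‖ ^ r := by
      rw [norm_smul, Real.norm_eq_abs, abs_of_nonneg (Real.rpow_nonneg ht0 _)]
      exact aux_rpow_mul_self ht0 hr
    have h2 : ‖(‖a‖ ^ (r - 1)) • a - (‖b‖ ^ (r - 1)) • b‖ ≤ ‖a‖ ^ r + ‖b‖ ^ r := by
      calc ‖(‖a‖ ^ (r - 1)) • a - (‖b‖ ^ (r - 1)) • b‖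
          ≤ ‖(‖a‖ ^ (r - 1)) • a‖ + ‖(‖b‖ ^ (r - 1)) • b‖ := norm_sub_le _ _
        _ = ‖a‖ ^ r + ‖b‖ ^ r := by rw [hCa, hCb]
    have h3 : ‖a - b‖ ≤ ‖a‖ + ‖b‖ := norm_sub_le a b
    have hmono : 0 ≤ (‖a‖ ^ r - ‖b‖ ^ r) * (‖a‖ - ‖b‖) := by
      rcases le_total ‖b‖ ‖a‖ with hba | hab
      · have := Real.rpow_le_rpow ht0 hba (by linarith : (0:ℝ) ≤ r)
        apply mul_nonneg <;> linarith
      · have := Real.rpow_le_rpow hs0 hab (by linarith : (0:ℝ) ≤ r)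
        have h1 : ‖a‖ ^ r - ‖b‖ ^ r ≤ 0 := by linarith
        have h2 : ‖a‖ - ‖b‖ ≤ 0 := by linarith
        nlinarith [h1, h2]
    have hss : ‖a‖ ^ r * ‖a‖ = ‖a‖ ^ (r+1) := by
      have := aux_rpow_mul_self hs0 (by linarith : 1 ≤ r + 1)
      rwa [show r + 1 - 1 = r by ring] at this
    have htt : ‖b‖ ^ r * ‖b‖ = ‖b‖ ^ (r+1) := by
      have := aux_rpow_mul_self ht0 (by linarith : 1 ≤ r + 1)
      rwa [show r + 1 - 1 = r by ring] at this
    have h4 : (‖a‖ ^ r + ‖b‖ ^ r) * (‖a‖ + ‖b‖) ≤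
        2 * (‖a‖ ^ (r + 1) + ‖b‖ ^ (r + 1)) := by
      nlinarith [hmono, hss, htt]
    calc ‖⟪(‖a‖ ^ (r - 1)) • a - (‖b‖ ^ (r - 1)) • b, a - b⟫‖
        ≤ ‖(‖a‖ ^ (r - 1)) • a - (‖b‖ ^ (r - 1)) • b‖ * ‖a - b‖ := h1
      _ ≤ (‖a‖ ^ r + ‖b‖ ^ r) * (‖a‖ + ‖b‖) := by
          apply mul_le_mul h2 h3 (norm_nonneg _)
          positivity
      _ ≤ 2 * (‖a‖ ^ (r + 1) + ‖b‖ ^ (r + 1)) := h4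
  have hint : Integrable (fun x =>
      ⟪(‖u x‖ ^ (r - 1)) • u x - (‖v x‖ ^ (r - 1)) • v x, u x - v x⟫) m := by
    apply Integrable.mono' ((hur.add hvr).const_mul 2) hmeas.aestronglyMeasurable
    exact Filter.Eventually.of_forall hbound
  rw [← integral_const_mul]
  apply integral_mono_of_nonneg
  · apply Filter.Eventually.of_forall
    intro x
    have h1 : (0:ℝ) < 2 ^ (1 - r) := Real.rpow_pos_of_pos (by norm_num) _
    have h2 : (0:ℝ) ≤ ‖u x - v x‖ ^ (r + 1) := Real.rpow_nonneg (norm_nonneg _) _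
    positivity
  · exact hint
  · exact Filter.Eventually.of_forall fun x => forchheimer_pointwise hr (u x) (v x)
end

section
/- Let f : ℝ² → ℝ be a continuously differentiable function with compact support. Then ∫_{ℝ²} f(x)⁴ dx ≤ 2 (∫_{ℝ²} f(x)² dx) (∫_{ℝ²} |∇f(x)|² dx), where |∇f(x)|² = (∂f/∂x₁)(x)² + (∂f/∂x₂)(x)² and integrals are with respect to Lebesgue measure. Equivalently, ‖f‖_{L⁴}² ≤ √2 ‖f‖_{L²} ‖∇f‖_{L²}. -/
open MeasureTheory

lemma lady_aux_1d (h : ℝ → ℝ) (hh : ContDiff ℝ 1 h) (hs : HasCompactSupport h) (a : ℝ) :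
    |h a| ≤ ∫ t, |deriv h t| := by
  have hderiv_cont : Continuous (deriv h) := hh.continuous_deriv le_rfl
  have hint : Integrable (fun t => |deriv h t|) := by
    exact (hderiv_cont.abs.integrable_of_hasCompactSupport ((hs.deriv).abs))
  have hnn : 0 ≤ ∫ t, |deriv h t| := integral_nonneg fun t => abs_nonneg _
  obtain ⟨R, hR⟩ := hs.isCompact.isBounded.subset_closedBall 0
  set b : ℝ := -(|R| + 1) with hb
  have hhb : h b = 0 := by
    apply image_eq_zero_of_notMem_tsupport
    intro hmem
    have := hR hmem
    simp only [Metric.mem_closedBall, Real.dist_eq, sub_zero] at this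
    rw [hb] at this
    rw [abs_neg, abs_of_nonneg (by positivity)] at this
    nlinarith [abs_nonneg R, le_abs_self R]
  rcases le_or_gt a b with hab | hab
  · rcases eq_or_lt_of_le hab with rfl | hab'
    · simp [hhb, hnn]
    · have : h a = 0 := by
        apply image_eq_zero_of_notMem_tsupport
        intro hmem
        have := hR hmem
        simp only [Metric.mem_closedBall, Real.dist_eq, sub_zero] at this
        rw [hb] at hab'
        have h2 : -|a| ≤ a := neg_abs_le a
        have h3 : R ≤ |R| := le_abs_self R
        linarith
      simp [this, hnn]
  · have hba : b ≤ a := hab.le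
    have heq : h a = ∫ t in b..a, deriv h t := by
      rw [intervalIntegral.integral_deriv_eq_sub (fun x _ => hh.differentiable one_ne_zero x)
        (hderiv_cont.intervalIntegrable _ _), hhb, sub_zero]
    calc |h a| = |∫ t in b..a, deriv h t| := by rw [heq]
      _ ≤ ∫ t in b..a, |deriv h t| := intervalIntegral.abs_integral_le_integral_abs hba
      _ = ∫ t in Set.Ioc b a, |deriv h t| := intervalIntegral.integral_of_le hba
      _ ≤ ∫ t, |deriv h t| := setIntegral_le_integral hint
          (Filter.Eventually.of_forall fun t => abs_nonneg _)

lemma lady_slice1 (g : ℝ × ℝ → ℝ) (hg : ContDiff ℝ 1 g) (hs : HasCompactSupport g)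
    (a b : ℝ) : |g (a, b)| ≤ ∫ t, |fderiv ℝ g (t, b) (1, 0)| := by
  set k : ℝ → ℝ := fun t => g (t, b) with hk
  have hmap : Isometry (fun t : ℝ => (t, b)) := by
    apply Isometry.of_dist_eq
    intro x y
    simp [Prod.dist_eq, Real.dist_eq]
  have hkc : ContDiff ℝ 1 k := hg.comp (contDiff_id.prodMk contDiff_const)
  have hks : HasCompactSupport k := hs.comp_isClosedEmbedding hmap.isClosedEmbedding
  have hkd : ∀ t, deriv k t = fderiv ℝ g (t, b) (1, 0) := by
    intro t
    have h1 : HasDerivAt (fun t : ℝ => (t, b)) ((1 : ℝ), (0 : ℝ)) t :=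
      (hasDerivAt_id t).prodMk (hasDerivAt_const t b)
    have h2 : HasDerivAt k (fderiv ℝ g (t, b) (1, 0)) t :=
      ((hg.differentiable one_ne_zero (t, b)).hasFDerivAt).comp_hasDerivAt t h1
    exact h2.deriv
  have := lady_aux_1d k hkc hks a
  simp only [hkd] at this
  simpa only [hk] using this

lemma lady_slice2 (g : ℝ × ℝ → ℝ) (hg : ContDiff ℝ 1 g) (hs : HasCompactSupport g)
    (a b : ℝ) : |g (a, b)| ≤ ∫ t, |fderiv ℝ g (a, t) (0, 1)| := by
  set k : ℝ → ℝ := fun t => g (a, t) with hk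
  have hmap : Isometry (fun t : ℝ => (a, t)) := by
    apply Isometry.of_dist_eq
    intro x y
    simp [Prod.dist_eq, Real.dist_eq]
  have hkc : ContDiff ℝ 1 k := hg.comp (contDiff_const.prodMk contDiff_id)
  have hks : HasCompactSupport k := hs.comp_isClosedEmbedding hmap.isClosedEmbedding
  have hkd : ∀ t, deriv k t = fderiv ℝ g (a, t) (0, 1) := by
    intro t
    have h1 : HasDerivAt (fun t : ℝ => (a, t)) ((0 : ℝ), (1 : ℝ)) t :=
      (hasDerivAt_const t a).prodMk (hasDerivAt_id t)
    have h2 : HasDerivAt k (fderiv ℝ g (a, t) (0, 1)) t :=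
      ((hg.differentiable one_ne_zero (a, t)).hasFDerivAt).comp_hasDerivAt t h1
    exact h2.deriv
  have := lady_aux_1d k hkc hks b
  simp only [hkd] at this
  simpa only [hk] using this
lemma lady_prod (g : ℝ × ℝ → ℝ) (hg : ContDiff ℝ 1 g) (hs : HasCompactSupport g) :
    ∫ p, g p ^ 2 ≤ (∫ p, |fderiv ℝ g p (1, 0)|) * (∫ p, |fderiv ℝ g p (0, 1)|) := by
  set D1 : ℝ × ℝ → ℝ := fun p => fderiv ℝ g p (1, 0) with hD1
  set D2 : ℝ × ℝ → ℝ := fun p => fderiv ℝ g p (0, 1) with hD2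
  have hD1c : Continuous D1 := (hg.continuous_fderiv one_ne_zero).clm_apply continuous_const
  have hD2c : Continuous D2 := (hg.continuous_fderiv one_ne_zero).clm_apply continuous_const
  have hD1s : HasCompactSupport D1 :=
    (hs.fderiv ℝ).comp_left (g := fun L : ℝ × ℝ →L[ℝ] ℝ => L (1, 0)) rfl
  have hD2s : HasCompactSupport D2 :=
    (hs.fderiv ℝ).comp_left (g := fun L : ℝ × ℝ →L[ℝ] ℝ => L (0, 1)) rfl
  have hint1 : Integrable (fun p => |D1 p|) :=
    hD1c.abs.integrable_of_hasCompactSupport hD1s.abs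
  have hint2 : Integrable (fun p => |D2 p|) :=
    hD2c.abs.integrable_of_hasCompactSupport hD2s.abs
  have hgint : Integrable (fun p => g p ^ 2) :=
    ((continuous_pow 2).comp hg.continuous).integrable_of_hasCompactSupport
      (hs.comp_left (g := fun y : ℝ => y ^ 2) (by simp))
  set F1 : ℝ → ℝ := fun b => ∫ t, |D1 (t, b)| with hF1
  set F2 : ℝ → ℝ := fun a => ∫ t, |D2 (a, t)| with hF2
  -- the swapped version of |D1|
  set A : ℝ × ℝ → ℝ := fun q => |D1 (q.2, q.1)| with hA
  have hAc : Continuous A := hD1c.abs.comp (continuous_snd.prodMk continuous_fst)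
  have hAs : HasCompactSupport A := by
    have : A = (fun p => |D1 p|) ∘ ⇑(Homeomorph.prodComm ℝ ℝ) := rfl
    rw [this]
    exact hD1s.abs.comp_isClosedEmbedding (Homeomorph.prodComm ℝ ℝ).isClosedEmbedding
  have hAint : Integrable A := hAc.integrable_of_hasCompactSupport hAs
  rw [MeasureTheory.Measure.volume_eq_prod] at hint1 hint2 hgint hAint ⊢
  have hF2int : Integrable F2 := hint2.integral_prod_left
  have hF1int : Integrable F1 := hAint.integral_prod_left
  have hmulint : Integrable (fun z : ℝ × ℝ => F2 z.1 * F1 z.2)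
      ((volume : Measure ℝ).prod volume) := hF2int.mul_prod hF1int
  have hpt : ∀ p : ℝ × ℝ, g p ^ 2 ≤ F2 p.1 * F1 p.2 := by
    intro p
    have h1 : |g p| ≤ F1 p.2 := by
      simpa using lady_slice1 g hg hs p.1 p.2
    have h2 : |g p| ≤ F2 p.1 := by
      simpa using lady_slice2 g hg hs p.1 p.2
    calc g p ^ 2 = |g p| * |g p| := by rw [sq, ← abs_mul_abs_self]
      _ ≤ F2 p.1 * F1 p.2 :=
          mul_le_mul h2 h1 (abs_nonneg _) (le_trans (abs_nonneg _) h2)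
  calc ∫ p, g p ^ 2 ∂((volume : Measure ℝ).prod volume)
      ≤ ∫ z, F2 z.1 * F1 z.2 ∂((volume : Measure ℝ).prod volume) :=
        integral_mono hgint hmulint hpt
    _ = (∫ a, F2 a) * ∫ b, F1 b := integral_prod_mul F2 F1
    _ = (∫ p, |D2 p| ∂((volume : Measure ℝ).prod volume)) *
          ∫ p, |D1 p| ∂((volume : Measure ℝ).prod volume) := by
        have hint2' : Integrable (Function.uncurry fun a t => |D2 (a, t)|)
            ((volume : Measure ℝ).prod volume) := hint2
        have hAint' : Integrable (Function.uncurry fun b t => |D1 (t, b)|)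
            ((volume : Measure ℝ).prod volume) := hAint
        have e1 : ∫ a, F2 a = ∫ p, |D2 p| ∂((volume : Measure ℝ).prod volume) :=
          integral_integral hint2'
        have e2 : ∫ b, F1 b = ∫ p, A p ∂((volume : Measure ℝ).prod volume) :=
          integral_integral hAint'
        have e3 : ∫ p, A p ∂((volume : Measure ℝ).prod volume)
            = ∫ p, |D1 p| ∂((volume : Measure ℝ).prod volume) :=
          integral_prod_swap (fun p => |D1 p|)
        rw [e1, e2, e3]
    _ = _ := by rw [mul_comm]

lemma lady_holder (u v : ℝ × ℝ → ℝ) (hu : Continuous u) (hus : HasCompactSupport u)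
    (hv : Continuous v) (hvs : HasCompactSupport v) :
    ∫ p, |u p| * |v p| ≤ Real.sqrt (∫ p, u p ^ 2) * Real.sqrt (∫ p, v p ^ 2) := by
  have hpq : Real.HolderConjugate 2 2 := Real.HolderConjugate.two_two
  have hmu : MemLp (fun p => |u p|) (ENNReal.ofReal 2) :=
    hu.abs.memLp_of_hasCompactSupport (hus.abs)
  have hmv : MemLp (fun p => |v p|) (ENNReal.ofReal 2) :=
    hv.abs.memLp_of_hasCompactSupport (hvs.abs)
  have := integral_mul_le_Lp_mul_Lq_of_nonneg hpq
    (Filter.Eventually.of_forall fun p => abs_nonneg (u p))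
    (Filter.Eventually.of_forall fun p => abs_nonneg (v p)) hmu hmv
  calc ∫ p, |u p| * |v p| ≤
      (∫ p, |u p| ^ (2:ℝ)) ^ (1/2:ℝ) * (∫ p, |v p| ^ (2:ℝ)) ^ (1/2:ℝ) := this
    _ = Real.sqrt (∫ p, u p ^ 2) * Real.sqrt (∫ p, v p ^ 2) := by
        rw [← Real.sqrt_eq_rpow, ← Real.sqrt_eq_rpow]
        congr 1 <;> congr 1 <;> apply integral_congr_ae <;>
          refine Filter.Eventually.of_forall fun p => ?_ <;>
          show |_| ^ (2:ℝ) = _ <;> rw [Real.rpow_two, sq_abs]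

lemma lady_R2 (h : ℝ × ℝ → ℝ) (hh : ContDiff ℝ 1 h) (hs : HasCompactSupport h) :
    ∫ p, h p ^ 4 ≤ 2 * (∫ p, h p ^ 2) *
      ∫ p, ((fderiv ℝ h p (1, 0)) ^ 2 + (fderiv ℝ h p (0, 1)) ^ 2) := by
  set D1 : ℝ × ℝ → ℝ := fun p => fderiv ℝ h p (1, 0) with hD1
  set D2 : ℝ × ℝ → ℝ := fun p => fderiv ℝ h p (0, 1) with hD2
  have hD1c : Continuous D1 := (hh.continuous_fderiv one_ne_zero).clm_apply continuous_const
  have hD2c : Continuous D2 := (hh.continuous_fderiv one_ne_zero).clm_apply continuous_const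
  have hD1s : HasCompactSupport D1 :=
    (hs.fderiv ℝ).comp_left (g := fun L : ℝ × ℝ →L[ℝ] ℝ => L (1, 0)) rfl
  have hD2s : HasCompactSupport D2 :=
    (hs.fderiv ℝ).comp_left (g := fun L : ℝ × ℝ →L[ℝ] ℝ => L (0, 1)) rfl
  set g : ℝ × ℝ → ℝ := fun p => h p ^ 2 with hgdef
  have hgc : ContDiff ℝ 1 g := hh.pow 2
  have hgs : HasCompactSupport g := hs.comp_left (g := fun y : ℝ => y ^ 2) (by simp)
  have hfd : ∀ p (w : ℝ × ℝ), fderiv ℝ g p w = 2 * h p * fderiv ℝ h p w := by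
    intro p w
    have hd : HasFDerivAt h (fderiv ℝ h p) p := (hh.differentiable one_ne_zero p).hasFDerivAt
    have : HasFDerivAt g (h p • fderiv ℝ h p + h p • fderiv ℝ h p) p := by
      have := hd.mul hd
      simpa [hgdef, sq, Pi.mul_def] using this
    rw [this.fderiv]
    simp [two_mul]
    ring
  have key := lady_prod g hgc hgs
  have hg4 : (∫ p, g p ^ 2) = ∫ p, h p ^ 4 := by
    apply integral_congr_ae; refine Filter.Eventually.of_forall fun p => ?_
    simp [hgdef]; ring
  have he1 : (∫ p, |fderiv ℝ g p (1, 0)|) = 2 * ∫ p, |h p| * |D1 p| := by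
    rw [← integral_const_mul]
    apply integral_congr_ae; refine Filter.Eventually.of_forall fun p => ?_
    show |fderiv ℝ g p (1, 0)| = 2 * (|h p| * |D1 p|)
    rw [hfd p (1, 0), abs_mul, abs_mul, abs_two, mul_assoc]
  have he2 : (∫ p, |fderiv ℝ g p (0, 1)|) = 2 * ∫ p, |h p| * |D2 p| := by
    rw [← integral_const_mul]
    apply integral_congr_ae; refine Filter.Eventually.of_forall fun p => ?_
    show |fderiv ℝ g p (0, 1)| = 2 * (|h p| * |D2 p|)
    rw [hfd p (0, 1), abs_mul, abs_mul, abs_two, mul_assoc]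
  rw [hg4, he1, he2] at key
  have hH1 := lady_holder h D1 hh.continuous hs hD1c hD1s
  have hH2 := lady_holder h D2 hh.continuous hs hD2c hD2s
  set X := ∫ p, h p ^ 2 with hX
  set A1 := ∫ p, D1 p ^ 2 with hA1
  set A2 := ∫ p, D2 p ^ 2 with hA2
  have hXnn : 0 ≤ X := integral_nonneg fun p => sq_nonneg _
  have hA1nn : 0 ≤ A1 := integral_nonneg fun p => sq_nonneg _
  have hA2nn : 0 ≤ A2 := integral_nonneg fun p => sq_nonneg _
  have hsum : (∫ p, ((fderiv ℝ h p (1, 0)) ^ 2 + (fderiv ℝ h p (0, 1)) ^ 2)) = A1 + A2 := by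
    rw [integral_add]
    · exact ((continuous_pow 2).comp hD1c).integrable_of_hasCompactSupport
        (hD1s.comp_left (g := fun y : ℝ => y ^ 2) (by simp))
    · exact ((continuous_pow 2).comp hD2c).integrable_of_hasCompactSupport
        (hD2s.comp_left (g := fun y : ℝ => y ^ 2) (by simp))
  rw [hsum]
  have hI1nn : 0 ≤ ∫ p, |h p| * |D1 p| :=
    integral_nonneg fun p => mul_nonneg (abs_nonneg _) (abs_nonneg _)
  have hstep : (2 * ∫ p, |h p| * |D1 p|) * (2 * ∫ p, |h p| * |D2 p|) ≤
      2 * X * (A1 + A2) := by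
    have hb : (2 * ∫ p, |h p| * |D1 p|) * (2 * ∫ p, |h p| * |D2 p|) ≤
        (2 * (Real.sqrt X * Real.sqrt A1)) * (2 * (Real.sqrt X * Real.sqrt A2)) := by
      apply mul_le_mul (by linarith) (by linarith) (by positivity) (by positivity)
    refine hb.trans ?_
    have hss : Real.sqrt X * Real.sqrt X = X := Real.mul_self_sqrt hXnn
    have h2ab : 2 * (Real.sqrt A1 * Real.sqrt A2) ≤ A1 + A2 := by
      have := two_mul_le_add_sq (Real.sqrt A1) (Real.sqrt A2)
      rwa [Real.sq_sqrt hA1nn, Real.sq_sqrt hA2nn, mul_assoc] at this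
    nlinarith [Real.sqrt_nonneg X, Real.sqrt_nonneg A1, Real.sqrt_nonneg A2]
  linarith [key, hstep]

/-- The two-dimensional Ladyzhenskaya inequality:
`∫ f⁴ ≤ 2 (∫ f²) (∫ |∇f|²)` for compactly supported `C¹` functions `f : ℝ² → ℝ`. -/
theorem ladyzhenskaya_2d (f : EuclideanSpace ℝ (Fin 2) → ℝ)
    (hf : ContDiff ℝ 1 f) (hfs : HasCompactSupport f) :
    ∫ x, f x ^ 4 ≤
      2 * (∫ x, f x ^ 2) * ∫ x, ∑ i, (fderiv ℝ f x (EuclideanSpace.single i 1)) ^ 2 := by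
  set e : EuclideanSpace ℝ (Fin 2) ≃L[ℝ] ℝ × ℝ :=
    (EuclideanSpace.equiv (Fin 2) ℝ).trans (ContinuousLinearEquiv.finTwoArrow ℝ ℝ) with he
  have hecomp : (⇑e : EuclideanSpace ℝ (Fin 2) → ℝ × ℝ) =
      (⇑(MeasurableEquiv.finTwoArrow (α := ℝ)) ∘ ⇑(MeasurableEquiv.toLp 2 (Fin 2 → ℝ)).symm) := rfl
  have hmp : MeasurePreserving (⇑e) (volume : Measure (EuclideanSpace ℝ (Fin 2)))
      (volume : Measure (ℝ × ℝ)) := by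
    rw [hecomp]
    exact (volume_preserving_finTwoArrow ℝ).comp
      (EuclideanSpace.volume_preserving_symm_measurableEquiv_toLp (Fin 2))
  have hemb : MeasurableEmbedding (⇑e) := by
    rw [hecomp]
    exact ((MeasurableEquiv.toLp 2 (Fin 2 → ℝ)).symm.trans
      (MeasurableEquiv.finTwoArrow)).measurableEmbedding
  set h : ℝ × ℝ → ℝ := fun p => f (e.symm p) with hhdef
  have hhf : h = f ∘ ⇑e.symm := rfl
  have hhc : ContDiff ℝ 1 h := hf.comp e.symm.contDiff
  have hhs : HasCompactSupport h := by
    rw [hhf]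
    exact hfs.comp_isClosedEmbedding e.symm.toHomeomorph.isClosedEmbedding
  have hrepr : ∀ x, f x = h (e x) := by
    intro x; rw [hhdef]; simp
  have hfd : ∀ x (w : ℝ × ℝ), fderiv ℝ h (e x) w = fderiv ℝ f x (e.symm w) := by
    intro x w
    have hder : HasFDerivAt f (fderiv ℝ f x) x := (hf.differentiable one_ne_zero x).hasFDerivAt
    have : HasFDerivAt (f ∘ ⇑e.symm) ((fderiv ℝ f x).comp (e.symm : ℝ × ℝ →L[ℝ] _)) (e x) :=
      (e.symm.comp_right_hasFDerivAt_iff).mpr (by rw [e.symm_apply_apply]; exact hder)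
    rw [hhf, this.fderiv]
    rfl
  have hsingle0 : e.symm (1, 0) = EuclideanSpace.single (0 : Fin 2) (1 : ℝ) := by
    rw [ContinuousLinearEquiv.symm_apply_eq]
    symm
    refine Prod.ext ?_ ?_ <;>
      simp [he, EuclideanSpace.single_apply]
  have hsingle1 : e.symm (0, 1) = EuclideanSpace.single (1 : Fin 2) (1 : ℝ) := by
    rw [ContinuousLinearEquiv.symm_apply_eq]
    symm
    refine Prod.ext ?_ ?_ <;>
      simp [he, EuclideanSpace.single_apply]
  have key := lady_R2 h hhc hhs
  have e4 : (∫ x, f x ^ 4) = ∫ p, h p ^ 4 := by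
    rw [← hmp.integral_comp hemb]
    exact integral_congr_ae (Filter.Eventually.of_forall fun x => by simp only [hrepr])
  have e2 : (∫ x, f x ^ 2) = ∫ p, h p ^ 2 := by
    rw [← hmp.integral_comp hemb]
    exact integral_congr_ae (Filter.Eventually.of_forall fun x => by simp only [hrepr])
  have eg : (∫ x, ∑ i, (fderiv ℝ f x (EuclideanSpace.single i 1)) ^ 2) =
      ∫ p, ((fderiv ℝ h p (1, 0)) ^ 2 + (fderiv ℝ h p (0, 1)) ^ 2) := by
    rw [← hmp.integral_comp hemb]
    apply integral_congr_ae
    refine Filter.Eventually.of_forall fun x => ?_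
    show (∑ i, (fderiv ℝ f x (EuclideanSpace.single i 1)) ^ 2) =
      (fderiv ℝ h (e x)) (1, 0) ^ 2 + (fderiv ℝ h (e x)) (0, 1) ^ 2
    rw [Fin.sum_univ_two, hfd x (1, 0), hfd x (0, 1), hsingle0, hsingle1]
  rw [e4, e2, eg]
  exact key
end

section
/- Let v, w : ℝ² → ℝ² be continuously differentiable vector fields with compact support. Then |∫_{ℝ²} Σ_{i,j=1}^{2} w_i(x)(∂v_j/∂x_i)(x) w_j(x) dx| ≤ √2 (∫_{ℝ²} |∇v|² dx)^{1/2} (∫_{ℝ²} |w|² dx)^{1/2} (∫_{ℝ²} |∇w|² dx)^{1/2}, where |∇v|² = Σ_{i,j} ((∂v_j/∂x_i))² and |w| is the Euclidean norm; integrals are with respect to Lebesgue measure. -/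
open MeasureTheory

open Topology


lemma ftc_fst (f : ℝ × ℝ → ℝ) (hf : ContDiff ℝ 1 f) (h2f : HasCompactSupport f) (x y : ℝ) :
    (‖f (x, y)‖₊ : ENNReal) ≤ ∫⁻ t, ‖fderiv ℝ f (t, y) (1, 0)‖₊ := by
  set g : ℝ → ℝ := fun t => f (t, y) with hg
  have hemb : IsClosedEmbedding (fun t : ℝ => (t, y)) :=
    Function.LeftInverse.isClosedEmbedding (f := Prod.fst) (fun t => rfl) continuous_fst
      (continuous_id.prodMk continuous_const)
  have hgc : ContDiff ℝ 1 g := hf.comp (contDiff_id.prodMk contDiff_const)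
  have hgs : HasCompactSupport g := h2f.comp_isClosedEmbedding hemb
  have hd : ∀ t, deriv g t = fderiv ℝ f (t, y) (1, 0) := by
    intro t
    have h1 : HasDerivAt (fun t : ℝ => (t, y)) (1, 0) t :=
      (hasDerivAt_id t).prodMk (hasDerivAt_const t y)
    have h2 : HasFDerivAt f (fderiv ℝ f (t, y)) (t, y) :=
      (hf.differentiable one_ne_zero (t, y)).hasFDerivAt
    exact (h2.comp_hasDerivAt t h1).deriv
  calc (‖f (x, y)‖₊ : ENNReal) = ‖g x‖₊ := rfl
    _ ≤ ∫⁻ t in Set.Iic x, ‖deriv g t‖₊ :=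
        HasCompactSupport.enorm_le_lintegral_Ici_deriv hgc hgs x
    _ ≤ ∫⁻ t, ‖deriv g t‖₊ := lintegral_mono' Measure.restrict_le_self le_rfl
    _ = ∫⁻ t, ‖fderiv ℝ f (t, y) (1, 0)‖₊ := by simp_rw [hd]

lemma ftc_snd (f : ℝ × ℝ → ℝ) (hf : ContDiff ℝ 1 f) (h2f : HasCompactSupport f) (x y : ℝ) :
    (‖f (x, y)‖₊ : ENNReal) ≤ ∫⁻ t, ‖fderiv ℝ f (x, t) (0, 1)‖₊ := by
  set g : ℝ → ℝ := fun t => f (x, t) with hg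
  have hemb : IsClosedEmbedding (fun t : ℝ => (x, t)) :=
    Function.LeftInverse.isClosedEmbedding (f := Prod.snd) (fun t => rfl) continuous_snd
      (continuous_const.prodMk continuous_id)
  have hgc : ContDiff ℝ 1 g := hf.comp (contDiff_const.prodMk contDiff_id)
  have hgs : HasCompactSupport g := h2f.comp_isClosedEmbedding hemb
  have hd : ∀ t, deriv g t = fderiv ℝ f (x, t) (0, 1) := by
    intro t
    have h1 : HasDerivAt (fun t : ℝ => (x, t)) (0, 1) t :=
      (hasDerivAt_const t x).prodMk (hasDerivAt_id t)
    have h2 : HasFDerivAt f (fderiv ℝ f (x, t)) (x, t) :=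
      (hf.differentiable one_ne_zero (x, t)).hasFDerivAt
    exact (h2.comp_hasDerivAt t h1).deriv
  calc (‖f (x, y)‖₊ : ENNReal) = ‖g y‖₊ := rfl
    _ ≤ ∫⁻ t in Set.Iic y, ‖deriv g t‖₊ :=
        HasCompactSupport.enorm_le_lintegral_Ici_deriv hgc hgs y
    _ ≤ ∫⁻ t, ‖deriv g t‖₊ := lintegral_mono' Measure.restrict_le_self le_rfl
    _ = ∫⁻ t, ‖fderiv ℝ f (x, t) (0, 1)‖₊ := by simp_rw [hd]

lemma key_prod (f : ℝ × ℝ → ℝ) (hf : ContDiff ℝ 1 f) (h2f : HasCompactSupport f) :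
    ∫⁻ p, (‖f p‖₊ : ENNReal) ^ 2 ≤
      (∫⁻ p, ‖fderiv ℝ f p (1, 0)‖₊) * (∫⁻ p, ‖fderiv ℝ f p (0, 1)‖₊) := by
  have hDc : Continuous (fderiv ℝ f) := hf.continuous_fderiv one_ne_zero
  have hD1 : Measurable fun p : ℝ × ℝ => (‖fderiv ℝ f p (1, 0)‖₊ : ENNReal) := by fun_prop
  have hD2 : Measurable fun p : ℝ × ℝ => (‖fderiv ℝ f p (0, 1)‖₊ : ENNReal) := by fun_prop
  set G : ℝ → ENNReal := fun y => ∫⁻ t, ‖fderiv ℝ f (t, y) (1, 0)‖₊ with hG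
  set H : ℝ → ENNReal := fun x => ∫⁻ t, ‖fderiv ℝ f (x, t) (0, 1)‖₊ with hH
  have hGm : Measurable G := by
    apply Measurable.lintegral_prod_left
    exact hD1
  have hHm : Measurable H := Measurable.lintegral_prod_right hD2
  have hpt : ∀ p : ℝ × ℝ, (‖f p‖₊ : ENNReal) ^ 2 ≤ H p.1 * G p.2 := by
    rintro ⟨x, y⟩
    have := mul_le_mul' (ftc_fst f hf h2f x y) (ftc_snd f hf h2f x y)
    calc (‖f (x, y)‖₊ : ENNReal) ^ 2 = ‖f (x, y)‖₊ * ‖f (x, y)‖₊ := sq _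
      _ ≤ G y * H x := by exact_mod_cast this
      _ = H x * G y := mul_comm _ _
  calc ∫⁻ p, (‖f p‖₊ : ENNReal) ^ 2 ≤ ∫⁻ p : ℝ × ℝ, H p.1 * G p.2 := lintegral_mono hpt
    _ = (∫⁻ x, H x) * (∫⁻ y, G y) := by
        rw [Measure.volume_eq_prod, lintegral_prod_mul hHm.aemeasurable hGm.aemeasurable]
    _ = (∫⁻ p, ‖fderiv ℝ f p (0, 1)‖₊) * (∫⁻ p, ‖fderiv ℝ f p (1, 0)‖₊) := by
        congr 1
        · rw [Measure.volume_eq_prod, lintegral_prod _ hD2.aemeasurable]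
        · rw [Measure.volume_eq_prod, lintegral_prod_symm _ hD1.aemeasurable]
    _ = _ := mul_comm _ _


noncomputable abbrev E2 := EuclideanSpace ℝ (Fin 2)

noncomputable def psiCLE : (ℝ × ℝ) ≃L[ℝ] E2 :=
  (ContinuousLinearEquiv.finTwoArrow ℝ ℝ).symm.trans
    (EuclideanSpace.equiv (Fin 2) ℝ).symm

lemma psi_meas_pres : MeasurePreserving (psiCLE : ℝ × ℝ → E2) := by
  have h1 : MeasurePreserving (MeasurableEquiv.toLp 2 (Fin 2 → ℝ)) :=
    (EuclideanSpace.volume_preserving_symm_measurableEquiv_toLp (Fin 2)).symm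
  have h2 : MeasurePreserving (MeasurableEquiv.finTwoArrow (α := ℝ)).symm :=
    (volume_preserving_finTwoArrow ℝ).symm
  have : (psiCLE : ℝ × ℝ → E2) =
      (MeasurableEquiv.toLp 2 (Fin 2 → ℝ)) ∘ (MeasurableEquiv.finTwoArrow (α := ℝ)).symm := by
    funext p
    rfl
  rw [this]
  exact h1.comp h2

lemma psi_single0 : psiCLE (1, 0) = EuclideanSpace.single 0 1 := by
  apply (WithLp.equiv 2 (Fin 2 → ℝ)).injective; funext i; fin_cases i <;> rfl

lemma psi_single1 : psiCLE (0, 1) = EuclideanSpace.single 1 1 := by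
  apply (WithLp.equiv 2 (Fin 2 → ℝ)).injective; funext i; fin_cases i <;> rfl


lemma key_E (f : E2 → ℝ) (hf : ContDiff ℝ 1 f) (h2f : HasCompactSupport f) :
    ∫⁻ x, (‖f x‖₊ : ENNReal) ^ 2 ≤
      (∫⁻ x, ‖fderiv ℝ f x (EuclideanSpace.single 0 1)‖₊) *
      (∫⁻ x, ‖fderiv ℝ f x (EuclideanSpace.single 1 1)‖₊) := by
  set ψ := psiCLE
  set g : ℝ × ℝ → ℝ := fun p => f (ψ p) with hgdef
  have hg : ContDiff ℝ 1 g := hf.comp ψ.contDiff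
  have h2g : HasCompactSupport g := h2f.comp_homeomorph ψ.toHomeomorph
  have hdg : ∀ p u, fderiv ℝ g p u = fderiv ℝ f (ψ p) (ψ u) := by
    intro p u
    have h1 : HasFDerivAt f (fderiv ℝ f (ψ p)) (ψ p) :=
      (hf.differentiable one_ne_zero (ψ p)).hasFDerivAt
    have h2 : HasFDerivAt g ((fderiv ℝ f (ψ p)).comp (ψ : (ℝ × ℝ) →L[ℝ] E2)) p :=
      h1.comp p (ψ.hasFDerivAt)
    rw [h2.fderiv]; rfl
  have hfc : Continuous f := hf.continuous
  have hmf : Measurable fun x : E2 => (‖f x‖₊ : ENNReal) ^ 2 := by fun_prop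
  have hDc : Continuous (fderiv ℝ f) := hf.continuous_fderiv one_ne_zero
  have hm0 : Measurable fun x : E2 => (‖fderiv ℝ f x (EuclideanSpace.single 0 1)‖₊ : ENNReal) := by
    fun_prop
  have hm1 : Measurable fun x : E2 => (‖fderiv ℝ f x (EuclideanSpace.single 1 1)‖₊ : ENNReal) := by
    fun_prop
  calc ∫⁻ x, (‖f x‖₊ : ENNReal) ^ 2 = ∫⁻ p, (‖g p‖₊ : ENNReal) ^ 2 :=
        (psi_meas_pres.lintegral_comp hmf).symm
    _ ≤ (∫⁻ p, ‖fderiv ℝ g p (1, 0)‖₊) * (∫⁻ p, ‖fderiv ℝ g p (0, 1)‖₊) := key_prod g hg h2g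
    _ = (∫⁻ p, (‖fderiv ℝ f (ψ p) (EuclideanSpace.single 0 1)‖₊ : ENNReal)) *
        (∫⁻ p, (‖fderiv ℝ f (ψ p) (EuclideanSpace.single 1 1)‖₊ : ENNReal)) := by
        congr 1 <;> refine lintegral_congr fun p => ?_
        · rw [hdg p (1, 0), psi_single0]
        · rw [hdg p (0, 1), psi_single1]
    _ = _ := by
        rw [psi_meas_pres.lintegral_comp hm0, psi_meas_pres.lintegral_comp hm1]


lemma integrable_of_cc {f : E2 → ℝ} (hc : Continuous f) (hs : HasCompactSupport f) :
    Integrable f := hc.integrable_of_hasCompactSupport hs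

lemma key_E_real (f : E2 → ℝ) (hf : ContDiff ℝ 1 f) (h2f : HasCompactSupport f) :
    ∫ x, (f x) ^ 2 ≤ (∫ x, ‖fderiv ℝ f x (EuclideanSpace.single 0 1)‖) *
      (∫ x, ‖fderiv ℝ f x (EuclideanSpace.single 1 1)‖) := by
  have hfc := hf.continuous
  have hDc : Continuous (fderiv ℝ f) := hf.continuous_fderiv one_ne_zero
  have hD : ∀ u : E2, Integrable (fun x => fderiv ℝ f x u) := fun u =>
    integrable_of_cc (hDc.clm_apply continuous_const) (h2f.fderiv_apply ℝ u)
  have hint : Integrable (fun x => (f x) ^ 2) :=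
    integrable_of_cc (hfc.pow 2) (h2f.comp_left (g := fun t : ℝ => t ^ 2) (by simp))
  have key := key_E f hf h2f
  have hL : ∫⁻ x, (‖f x‖₊ : ENNReal) ^ 2 = ENNReal.ofReal (∫ x, (f x) ^ 2) := by
    rw [ofReal_integral_eq_lintegral_ofReal hint (Filter.Eventually.of_forall fun x => sq_nonneg _)]
    refine lintegral_congr fun x => ?_
    rw [← enorm_eq_nnnorm, Real.enorm_eq_ofReal_abs, ← ENNReal.ofReal_pow (abs_nonneg _), sq_abs]
  have hR : ∀ u : E2, (∫⁻ x, (‖fderiv ℝ f x u‖₊ : ENNReal)) =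
      ENNReal.ofReal (∫ x, ‖fderiv ℝ f x u‖) := fun u =>
    (ofReal_integral_norm_eq_lintegral_enorm (hD u)).symm
  rw [hL, hR, hR, ← ENNReal.ofReal_mul (by positivity)] at key
  exact (ENNReal.ofReal_le_ofReal_iff (by positivity)).mp key


lemma conj22 : Real.HolderConjugate 2 2 := Real.HolderConjugate.two_two

-- Hölder specialization: ∫ a b ≤ √(∫ a²) √(∫ b²) for nonneg cont compact support
lemma holder2 {a b : E2 → ℝ} (ha : Continuous a) (hb : Continuous b)
    (hsa : HasCompactSupport a) (hsb : HasCompactSupport b)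
    (h0a : ∀ x, 0 ≤ a x) (h0b : ∀ x, 0 ≤ b x) :
    ∫ x, a x * b x ≤ Real.sqrt (∫ x, (a x) ^ 2) * Real.sqrt (∫ x, (b x) ^ 2) := by
  have h := integral_mul_le_Lp_mul_Lq_of_nonneg conj22
    (Filter.Eventually.of_forall h0a) (Filter.Eventually.of_forall h0b)
    (by simpa using ha.memLp_of_hasCompactSupport (μ := volume) hsa)
    (by simpa using hb.memLp_of_hasCompactSupport (μ := volume) hsb)
  calc ∫ x, a x * b x ≤ (∫ x, a x ^ (2:ℝ)) ^ ((1:ℝ)/2) * (∫ x, b x ^ (2:ℝ)) ^ ((1:ℝ)/2) := h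
    _ = Real.sqrt (∫ x, (a x) ^ 2) * Real.sqrt (∫ x, (b x) ^ 2) := by
        rw [← Real.sqrt_eq_rpow, ← Real.sqrt_eq_rpow]
        norm_num [show ((2:ℝ)) = ((2:ℕ):ℝ) by norm_num, Real.rpow_natCast]

lemma lady (w : E2 → E2) (hw : ContDiff ℝ 1 w) (hws : HasCompactSupport w) :
    ∫ x, ‖w x‖ ^ 4 ≤ 2 * (∫ x, ‖w x‖ ^ 2) *
      (∫ x, ∑ i, ∑ j, (fderiv ℝ w x (EuclideanSpace.single i 1) j) ^ 2) := by
  classical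
  have hwc := hw.continuous
  have hDc : Continuous (fderiv ℝ w) := hw.continuous_fderiv one_ne_zero
  set f : E2 → ℝ := fun x => ‖w x‖ ^ 2 with hfdef
  have hf : ContDiff ℝ 1 f := hw.norm_sq ℝ
  have h2f : HasCompactSupport f := hws.comp_left (g := fun v : E2 => ‖v‖ ^ 2) (by simp)
  -- derivative bound
  have hDf : ∀ x u, ‖fderiv ℝ f x u‖ ≤ 2 * ‖w x‖ * ‖fderiv ℝ w x u‖ := by
    intro x u
    have h1 : HasFDerivAt w (fderiv ℝ w x) x := (hw.differentiable one_ne_zero x).hasFDerivAt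
    have h2 := h1.norm_sq
    rw [h2.fderiv]
    have h3 : (2 • ((innerSL ℝ (w x)).comp (fderiv ℝ w x))) u
        = 2 * (inner ℝ (w x) (fderiv ℝ w x u) : ℝ) := by
      simp [two_smul, two_mul]
    rw [h3]
    have h4 := abs_real_inner_le_norm (w x) (fderiv ℝ w x u)
    rw [norm_mul, Real.norm_eq_abs, Real.norm_eq_abs]
    calc |2| * |(inner ℝ (w x) (fderiv ℝ w x u) : ℝ)|
        ≤ 2 * (‖w x‖ * ‖fderiv ℝ w x u‖) := by
          rw [abs_two]; exact mul_le_mul_of_nonneg_left h4 (by norm_num)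
      _ = 2 * ‖w x‖ * ‖fderiv ℝ w x u‖ := by ring
  -- notation
  set e : Fin 2 → E2 := fun i => EuclideanSpace.single i 1 with he
  have hDiwc : ∀ u : E2, Continuous fun x => fderiv ℝ w x u := fun u =>
    hDc.clm_apply continuous_const
  have hDiws : ∀ u : E2, HasCompactSupport fun x => fderiv ℝ w x u := fun u =>
    hws.fderiv_apply ℝ u
  set L : ℝ := ∫ x, ‖w x‖ ^ 2 with hL
  have hLnn : 0 ≤ L := integral_nonneg fun x => sq_nonneg _
  set q : Fin 2 → ℝ := fun i => ∫ x, ‖fderiv ℝ w x (e i)‖ ^ 2 with hq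
  have hqnn : ∀ i, 0 ≤ q i := fun i => integral_nonneg fun x => sq_nonneg _
  -- step 1
  have step1 : ∀ i : Fin 2, (∫ x, ‖fderiv ℝ f x (e i)‖) ≤
      2 * (Real.sqrt L * Real.sqrt (q i)) := by
    intro i
    have hint2 : Integrable (fun x => ‖w x‖ * ‖fderiv ℝ w x (e i)‖) :=
      integrable_of_cc (hwc.norm.mul (hDiwc (e i)).norm) ((hws.norm.mul_right))
    have hm : (∫ x, ‖fderiv ℝ f x (e i)‖) ≤ ∫ x, 2 * (‖w x‖ * ‖fderiv ℝ w x (e i)‖) := by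
      refine integral_mono ?_ (hint2.const_mul 2) ?_
      · refine integrable_of_cc ((hf.continuous_fderiv one_ne_zero).clm_apply continuous_const).norm
          ((h2f.fderiv_apply ℝ (e i)).norm)
      · intro x
        simpa [mul_assoc] using hDf x (e i)
    have hh := holder2 hwc.norm (hDiwc (e i)).norm hws.norm ((hDiws (e i)).norm)
      (fun x => norm_nonneg _) (fun x => norm_nonneg _)
    calc (∫ x, ‖fderiv ℝ f x (e i)‖)
        ≤ ∫ x, 2 * (‖w x‖ * ‖fderiv ℝ w x (e i)‖) := hm
      _ = 2 * ∫ x, ‖w x‖ * ‖fderiv ℝ w x (e i)‖ := integral_const_mul 2 _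
      _ ≤ 2 * (Real.sqrt (∫ x, ‖w x‖ ^ 2) * Real.sqrt (∫ x, ‖fderiv ℝ w x (e i)‖ ^ 2)) := by
          exact mul_le_mul_of_nonneg_left hh (by norm_num)
      _ = 2 * (Real.sqrt L * Real.sqrt (q i)) := rfl
  -- combine with key_E_real
  have hkey := key_E_real f hf h2f
  have hchain : (∫ x, (f x) ^ 2) ≤ 4 * L * (Real.sqrt (q 0) * Real.sqrt (q 1)) := by
    have h0 : (0:ℝ) ≤ ∫ x, ‖fderiv ℝ f x (e 0)‖ := integral_nonneg fun x => norm_nonneg _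
    calc (∫ x, (f x) ^ 2)
        ≤ (∫ x, ‖fderiv ℝ f x (e 0)‖) * (∫ x, ‖fderiv ℝ f x (e 1)‖) := hkey
      _ ≤ (2 * (Real.sqrt L * Real.sqrt (q 0))) * (2 * (Real.sqrt L * Real.sqrt (q 1))) := by
          refine mul_le_mul (step1 0) (step1 1) (integral_nonneg fun x => norm_nonneg _) ?_
          positivity
      _ = 4 * (Real.sqrt L * Real.sqrt L) * (Real.sqrt (q 0) * Real.sqrt (q 1)) := by ring
      _ = 4 * L * (Real.sqrt (q 0) * Real.sqrt (q 1)) := by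
          rw [Real.mul_self_sqrt hLnn]
  have hamgm : Real.sqrt (q 0) * Real.sqrt (q 1) ≤ (q 0 + q 1) / 2 := by
    nlinarith [sq_nonneg (Real.sqrt (q 0) - Real.sqrt (q 1)), Real.sq_sqrt (hqnn 0),
      Real.sq_sqrt (hqnn 1), Real.sqrt_nonneg (q 0), Real.sqrt_nonneg (q 1)]
  -- identify the pieces
  have hf4 : (∫ x, (f x) ^ 2) = ∫ x, ‖w x‖ ^ 4 := by
    refine integral_congr_ae (Filter.Eventually.of_forall fun x => ?_)
    simp only [hfdef]; ring
  have hnormsq : ∀ (y : E2), ‖y‖ ^ 2 = ∑ j, (y j) ^ 2 := by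
    intro y
    rw [EuclideanSpace.norm_eq, Real.sq_sqrt (by positivity)]
    exact Finset.sum_congr rfl fun j _ => by rw [Real.norm_eq_abs, sq_abs]
  have hqsum : q 0 + q 1 = ∫ x, ∑ i, ∑ j, (fderiv ℝ w x (e i) j) ^ 2 := by
    have hint : ∀ i : Fin 2, Integrable (fun x => ‖fderiv ℝ w x (e i)‖ ^ 2) := fun i =>
      integrable_of_cc ((hDiwc (e i)).norm.pow 2)
        ((hDiws (e i)).comp_left (g := fun y : E2 => ‖y‖ ^ 2) (by simp))
    calc q 0 + q 1 = ∫ x, (‖fderiv ℝ w x (e 0)‖ ^ 2 + ‖fderiv ℝ w x (e 1)‖ ^ 2) :=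
          (integral_add (hint 0) (hint 1)).symm
      _ = ∫ x, ∑ i, ∑ j, (fderiv ℝ w x (e i) j) ^ 2 := by
          refine integral_congr_ae (Filter.Eventually.of_forall fun x => ?_)
          simp only [hnormsq, Fin.sum_univ_two]
  calc ∫ x, ‖w x‖ ^ 4 = ∫ x, (f x) ^ 2 := hf4.symm
    _ ≤ 4 * L * (Real.sqrt (q 0) * Real.sqrt (q 1)) := hchain
    _ ≤ 4 * L * ((q 0 + q 1) / 2) := by
        exact mul_le_mul_of_nonneg_left hamgm (by positivity)
    _ = 2 * L * (q 0 + q 1) := by ring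
    _ = 2 * (∫ x, ‖w x‖ ^ 2) * (∫ x, ∑ i, ∑ j, (fderiv ℝ w x (e i) j) ^ 2) := by
        rw [hqsum]


lemma hnormsq : ∀ (y : E2), ‖y‖ ^ 2 = ∑ j, (y j) ^ 2 := by
  intro y
  rw [EuclideanSpace.norm_eq, Real.sq_sqrt (by positivity)]
  exact Finset.sum_congr rfl fun j _ => by rw [Real.norm_eq_abs, sq_abs]


/-- Two-dimensional estimate of the convective trilinear form:
`|b(w, v, w)| ≤ √2 ‖∇v‖_{L²} ‖w‖_{L²} ‖∇w‖_{L²}`. -/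
theorem trilinear_form_estimate_2d
    (v w : EuclideanSpace ℝ (Fin 2) → EuclideanSpace ℝ (Fin 2))
    (hv : ContDiff ℝ 1 v) (hw : ContDiff ℝ 1 w)
    (hvs : HasCompactSupport v) (hws : HasCompactSupport w) :
    |∫ x, ∑ i, ∑ j, w x i * fderiv ℝ v x (EuclideanSpace.single i 1) j * w x j| ≤
      Real.sqrt 2 *
        (∫ x, ∑ i, ∑ j, (fderiv ℝ v x (EuclideanSpace.single i 1) j) ^ 2) ^ ((1 : ℝ) / 2) *
        (∫ x, ‖w x‖ ^ 2) ^ ((1 : ℝ) / 2) *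
        (∫ x, ∑ i, ∑ j, (fderiv ℝ w x (EuclideanSpace.single i 1) j) ^ 2) ^ ((1 : ℝ) / 2) := by
  classical
  have hwc := hw.continuous
  have hvDc : Continuous (fderiv ℝ v) := hv.continuous_fderiv one_ne_zero
  have hwDc : Continuous (fderiv ℝ w) := hw.continuous_fderiv one_ne_zero
  set e : Fin 2 → E2 := fun i => EuclideanSpace.single i 1 with he
  -- the three squared quantities
  set Nv : ℝ := ∫ x, ∑ i, ∑ j, (fderiv ℝ v x (e i) j) ^ 2 with hNv
  set L : ℝ := ∫ x, ‖w x‖ ^ 2 with hL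
  set Nw : ℝ := ∫ x, ∑ i, ∑ j, (fderiv ℝ w x (e i) j) ^ 2 with hNw
  have hNvnn : 0 ≤ Nv := integral_nonneg fun x => by positivity
  have hLnn : 0 ≤ L := integral_nonneg fun x => by positivity
  have hNwnn : 0 ≤ Nw := integral_nonneg fun x => by positivity
  -- pointwise matrix norm
  set A : E2 → ℝ := fun x => Real.sqrt (∑ i, ∑ j, (fderiv ℝ v x (e i) j) ^ 2) with hA
  have hcoordv : ∀ i j, Continuous fun x => fderiv ℝ v x (e i) j := fun i j =>
    (PiLp.continuous_apply 2 _ j).comp (hvDc.clm_apply continuous_const)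
  have hcoordw : ∀ i j, Continuous fun x => fderiv ℝ w x (e i) j := fun i j =>
    (PiLp.continuous_apply 2 _ j).comp (hwDc.clm_apply continuous_const)
  have hAc : Continuous A := by
    apply Real.continuous_sqrt.comp
    exact continuous_finset_sum _ fun i _ => continuous_finset_sum _ fun j _ => (hcoordv i j).pow 2
  have hAs : HasCompactSupport A := by
    apply (hvs.fderiv ℝ).comp_left
      (g := fun M : E2 →L[ℝ] E2 => Real.sqrt (∑ i, ∑ j, (M (e i) j) ^ 2))
    simp
  have hwsq : HasCompactSupport fun x => ‖w x‖ ^ 2 :=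
    hws.comp_left (g := fun y : E2 => ‖y‖ ^ 2) (by simp)
  have hwsqc : Continuous fun x => ‖w x‖ ^ 2 := (hwc.norm.pow 2)
  set β : E2 → ℝ := fun x => ∑ i, ∑ j, w x i * fderiv ℝ v x (e i) j * w x j with hβ
  have hβc : Continuous β := by
    apply continuous_finset_sum _ fun i _ => continuous_finset_sum _ fun j _ => ?_
    exact (((PiLp.continuous_apply 2 _ i).comp hwc).mul (hcoordv i j)).mul ((PiLp.continuous_apply 2 _ j).comp hwc)
  have hβs : HasCompactSupport β := by
    apply hws.mono'
    intro x hx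
    contrapose! hx
    have : w x = 0 := by
      by_contra h
      exact hx (subset_tsupport w (by simpa [Function.mem_support] using h))
    simp only [Function.mem_support, not_not, hβ]
    simp [this]
  -- pointwise Cauchy-Schwarz
  have hpt : ∀ x, |β x| ≤ A x * ‖w x‖ ^ 2 := by
    intro x
    have hcs := Finset.sum_mul_sq_le_sq_mul_sq Finset.univ
      (f := fun p : Fin 2 × Fin 2 => fderiv ℝ v x (e p.1) p.2)
      (g := fun p : Fin 2 × Fin 2 => w x p.1 * w x p.2)
    have hsum : β x = ∑ p : Fin 2 × Fin 2,
        (fderiv ℝ v x (e p.1) p.2) * (w x p.1 * w x p.2) := by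
      rw [Fintype.sum_prod_type]
      exact Finset.sum_congr rfl fun i _ => Finset.sum_congr rfl fun j _ => by ring
    have hg2 : ∑ p : Fin 2 × Fin 2, (w x p.1 * w x p.2) ^ 2 = (‖w x‖ ^ 2) ^ 2 := by
      rw [Fintype.sum_prod_type]
      calc ∑ i, ∑ j, (w x i * w x j) ^ 2 = ∑ i, ∑ j, (w x i) ^ 2 * (w x j) ^ 2 :=
            Finset.sum_congr rfl fun i _ => Finset.sum_congr rfl fun j _ => by ring
        _ = (∑ i, (w x i) ^ 2) * (∑ j, (w x j) ^ 2) := (Finset.sum_mul_sum _ _ _ _).symm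
        _ = (‖w x‖ ^ 2) ^ 2 := by rw [hnormsq]; ring
    have hf2 : ∑ p : Fin 2 × Fin 2, (fderiv ℝ v x (e p.1) p.2) ^ 2 = (A x) ^ 2 := by
      rw [hA, Real.sq_sqrt (by positivity), Fintype.sum_prod_type]
    have hsq : (β x) ^ 2 ≤ (A x * ‖w x‖ ^ 2) ^ 2 := by
      rw [hsum]
      calc (∑ p : Fin 2 × Fin 2, (fderiv ℝ v x (e p.1) p.2) * (w x p.1 * w x p.2)) ^ 2
          ≤ (∑ p : Fin 2 × Fin 2, (fderiv ℝ v x (e p.1) p.2) ^ 2) *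
            (∑ p : Fin 2 × Fin 2, (w x p.1 * w x p.2) ^ 2) := hcs
        _ = (A x * ‖w x‖ ^ 2) ^ 2 := by rw [hf2, hg2]; ring
    have h1 : |β x| = Real.sqrt ((β x) ^ 2) := (Real.sqrt_sq_eq_abs _).symm
    rw [h1]
    calc Real.sqrt ((β x) ^ 2) ≤ Real.sqrt ((A x * ‖w x‖ ^ 2) ^ 2) := Real.sqrt_le_sqrt hsq
      _ = A x * ‖w x‖ ^ 2 := Real.sqrt_sq (by positivity)
  -- integral comparison
  have hint1 : Integrable (fun x => |β x|) := (integrable_of_cc hβc hβs).abs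
  have hint2 : Integrable (fun x => A x * ‖w x‖ ^ 2) :=
    integrable_of_cc (hAc.mul hwsqc) (hAs.mul_right)
  have hAw : ∫ x, A x * ‖w x‖ ^ 2 ≤ Real.sqrt Nv * Real.sqrt (∫ x, ‖w x‖ ^ 4) := by
    have h := holder2 hAc hwsqc hAs hwsq (fun x => Real.sqrt_nonneg _) (fun x => by positivity)
    have e1 : ∫ x, (A x) ^ 2 = Nv := by
      refine integral_congr_ae (Filter.Eventually.of_forall fun x => ?_)
      simp only [hA]
      rw [Real.sq_sqrt (by positivity)]
    have e2 : ∫ x, (‖w x‖ ^ 2) ^ 2 = ∫ x, ‖w x‖ ^ 4 := by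
      refine integral_congr_ae (Filter.Eventually.of_forall fun x => ?_)
      ring
    rwa [e1, e2] at h
  have hlady := lady w hw hws
  have hsq4 : Real.sqrt (∫ x, ‖w x‖ ^ 4) ≤ Real.sqrt 2 * Real.sqrt L * Real.sqrt Nw := by
    calc Real.sqrt (∫ x, ‖w x‖ ^ 4) ≤ Real.sqrt (2 * L * Nw) := Real.sqrt_le_sqrt hlady
      _ = Real.sqrt 2 * Real.sqrt L * Real.sqrt Nw := by
        rw [Real.sqrt_mul (by positivity), Real.sqrt_mul (by norm_num)]
  calc |∫ x, β x| ≤ ∫ x, |β x| := by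
        rw [← Real.norm_eq_abs]
        exact (norm_integral_le_integral_norm β).trans_eq
          (integral_congr_ae (Filter.Eventually.of_forall fun x => Real.norm_eq_abs _))
    _ ≤ ∫ x, A x * ‖w x‖ ^ 2 := integral_mono hint1 hint2 hpt
    _ ≤ Real.sqrt Nv * Real.sqrt (∫ x, ‖w x‖ ^ 4) := hAw
    _ ≤ Real.sqrt Nv * (Real.sqrt 2 * Real.sqrt L * Real.sqrt Nw) :=
        mul_le_mul_of_nonneg_left hsq4 (Real.sqrt_nonneg _)
    _ = Real.sqrt 2 * Real.sqrt Nv * Real.sqrt L * Real.sqrt Nw := by ring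
    _ = Real.sqrt 2 * Nv ^ ((1:ℝ)/2) * L ^ ((1:ℝ)/2) * Nw ^ ((1:ℝ)/2) := by
        rw [Real.sqrt_eq_rpow, Real.sqrt_eq_rpow, Real.sqrt_eq_rpow, Real.sqrt_eq_rpow]
end
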